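/- Let g_x, g_v be real numbers and ρ_{x,j}, ρ_{v,j} (j = −2,…,2) real coefficients with ρ_{x,0} = ρ_{v,0} = 1, and define λ_x(φ) = g_x·Σ_{j=-2}^{2} ρ_{x,j} e^{iφj} and λ_v(φ) = g_v·Σ_{j=-2}^{2} ρ_{v,j} e^{iφj} for φ ∈ ℝ. If 2·Re(λ_x(φ)) − |λ_v(φ)|² ≤ 0 for all φ ∈ ℝ, then g_x − g_v²·Σ_{j=-2}^{2} ρ_{v,j}² ≤ 0. -/

import Mathlib

open Complex Finset

noncomputable def theta9 (m : ℕ) : ℝ := 2 * Real.pi * m / 9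

/-- Geometric-sum orthogonality at 9th roots of unity. -/
lemma S_ne (d : ℤ) (hd1 : -4 ≤ d) (hd2 : d ≤ 4) (hd0 : d ≠ 0) :
    ∑ m ∈ Finset.range 9, Complex.exp (Complex.I * (theta9 m : ℂ) * (d : ℂ)) = 0 := by
  have hz : ∀ m : ℕ, Complex.exp (Complex.I * (theta9 m : ℂ) * (d : ℂ))
      = (Complex.exp (Complex.I * ((2 * Real.pi / 9 : ℝ) : ℂ) * (d : ℂ))) ^ m := by
    intro m
    rw [← Complex.exp_nat_mul]
    congr 1
    push_cast [theta9]
    ring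
  simp_rw [hz]
  set z := Complex.exp (Complex.I * ((2 * Real.pi / 9 : ℝ) : ℂ) * (d : ℂ)) with hzdef
  have hz1 : z ≠ 1 := by
    intro hone
    rw [hzdef, Complex.exp_eq_one_iff] at hone
    obtain ⟨n, hn⟩ := hone
    have hpi : (Real.pi : ℂ) ≠ 0 := by exact_mod_cast Real.pi_ne_zero
    have hI : (Complex.I : ℂ) ≠ 0 := Complex.I_ne_zero
    have hdn : (d : ℂ) = 9 * n := by
      field_simp at hn
      have hne : (Complex.I * (2 * (Real.pi : ℂ))) ≠ 0 := by
        exact mul_ne_zero hI (by exact mul_ne_zero two_ne_zero hpi)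
      have key : (Complex.I * (2 * (Real.pi : ℂ))) * (d : ℂ)
          = (Complex.I * (2 * (Real.pi : ℂ))) * (9 * n) := by push_cast at hn; linear_combination (9 * Complex.I) * hn
      exact mul_left_cancel₀ hne key
    have hdn' : d = 9 * n := by exact_mod_cast hdn
    omega
  have h9 : z ^ 9 = 1 := by
    rw [hzdef, ← Complex.exp_nat_mul]
    rw [show (9 : ℕ) * (Complex.I * ((2 * Real.pi / 9 : ℝ) : ℂ) * (d : ℂ))
        = (d : ℂ) * (2 * (Real.pi : ℂ) * Complex.I) by push_cast; ring]
    exact Complex.exp_int_mul_two_pi_mul_I d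
  rw [geom_sum_eq hz1 9, h9]
  simp

lemma S_if (d : ℤ) (hd1 : -4 ≤ d) (hd2 : d ≤ 4) :
    ∑ m ∈ Finset.range 9, Complex.exp (Complex.I * (theta9 m : ℂ) * (d : ℂ))
      = if d = 0 then 9 else 0 := by
  by_cases hd : d = 0
  · subst hd; simp
  · simp [hd, S_ne d hd1 hd2 hd]

noncomputable def lam' (g : ℝ) (ρ : ℤ → ℝ) (φ : ℝ) : ℂ :=
  (g : ℂ) * ∑ j ∈ Finset.Icc (-2 : ℤ) 2,
    (ρ j : ℂ) * Complex.exp (Complex.I * (φ : ℂ) * (j : ℂ))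

lemma sum_lam' (g : ℝ) (ρ : ℤ → ℝ) (h0 : ρ 0 = 1) :
    ∑ m ∈ Finset.range 9, lam' g ρ (theta9 m) = ((9 * g : ℝ) : ℂ) := by
  unfold lam'
  rw [← Finset.mul_sum, Finset.sum_comm]
  have hcong : ∀ j ∈ Finset.Icc (-2 : ℤ) 2,
      ∑ m ∈ Finset.range 9, (ρ j : ℂ) * Complex.exp (Complex.I * (theta9 m : ℂ) * (j : ℂ))
        = (ρ j : ℂ) * (if j = 0 then 9 else 0) := by
    intro j hj
    rw [Finset.mem_Icc] at hj
    rw [← Finset.mul_sum, S_if j (by omega) (by omega)]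
  rw [Finset.sum_congr rfl hcong, Finset.sum_eq_single 0
      (by intro b _ hb; simp [hb]) (by intro habs; simp at habs)]
  simp [h0]
  ring

lemma conj_lam' (g : ℝ) (ρ : ℤ → ℝ) (φ : ℝ) :
    (starRingEnd ℂ) (lam' g ρ φ) = (g : ℂ) * ∑ k ∈ Finset.Icc (-2 : ℤ) 2,
      (ρ k : ℂ) * Complex.exp (-(Complex.I * (φ : ℂ) * (k : ℂ))) := by
  unfold lam'
  rw [map_mul, map_sum, Complex.conj_ofReal]
  congr 1
  refine Finset.sum_congr rfl fun k _ => ?_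
  rw [map_mul, Complex.conj_ofReal, ← Complex.exp_conj]
  congr 1
  simp [Complex.conj_I]

lemma mul_conj_lam' (g : ℝ) (ρ : ℤ → ℝ) (φ : ℝ) :
    lam' g ρ φ * (starRingEnd ℂ) (lam' g ρ φ)
      = (g : ℂ) ^ 2 * ∑ j ∈ Finset.Icc (-2 : ℤ) 2, ∑ k ∈ Finset.Icc (-2 : ℤ) 2,
          (ρ j : ℂ) * (ρ k : ℂ) * Complex.exp (Complex.I * (φ : ℂ) * ((j - k : ℤ) : ℂ)) := by
  rw [conj_lam']
  unfold lam'
  rw [show ((g : ℂ) * ∑ j ∈ Finset.Icc (-2:ℤ) 2, (ρ j : ℂ) *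
        Complex.exp (Complex.I * (φ:ℂ) * (j:ℂ))) *
      ((g : ℂ) * ∑ k ∈ Finset.Icc (-2:ℤ) 2, (ρ k : ℂ) *
        Complex.exp (-(Complex.I * (φ:ℂ) * (k:ℂ))))
      = (g:ℂ)^2 * ((∑ j ∈ Finset.Icc (-2:ℤ) 2, (ρ j : ℂ) *
        Complex.exp (Complex.I * (φ:ℂ) * (j:ℂ))) *
        (∑ k ∈ Finset.Icc (-2:ℤ) 2, (ρ k : ℂ) *
        Complex.exp (-(Complex.I * (φ:ℂ) * (k:ℂ))))) from by ring]
  congr 1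
  rw [Finset.sum_mul_sum]
  refine Finset.sum_congr rfl fun j _ => Finset.sum_congr rfl fun k _ => ?_
  rw [show ((ρ j : ℂ) * Complex.exp (Complex.I * (φ:ℂ) * (j:ℂ))) *
      ((ρ k : ℂ) * Complex.exp (-(Complex.I * (φ:ℂ) * (k:ℂ))))
      = (ρ j : ℂ) * (ρ k : ℂ) * (Complex.exp (Complex.I * (φ:ℂ) * (j:ℂ)) *
        Complex.exp (-(Complex.I * (φ:ℂ) * (k:ℂ)))) from by ring]
  rw [← Complex.exp_add]
  congr 1
  push_cast
  ring

lemma sum_normSq_lam' (g : ℝ) (ρ : ℤ → ℝ) :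
    ∑ m ∈ Finset.range 9, Complex.normSq (lam' g ρ (theta9 m))
      = 9 * g ^ 2 * ∑ j ∈ Finset.Icc (-2 : ℤ) 2, (ρ j) ^ 2 := by
  have key : ∑ m ∈ Finset.range 9,
      (lam' g ρ (theta9 m) * (starRingEnd ℂ) (lam' g ρ (theta9 m)))
      = ((9 * g ^ 2 * ∑ j ∈ Finset.Icc (-2 : ℤ) 2, (ρ j) ^ 2 : ℝ) : ℂ) := by
    simp_rw [mul_conj_lam']
    rw [← Finset.mul_sum, Finset.sum_comm]
    have hcong : ∀ j ∈ Finset.Icc (-2 : ℤ) 2,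
        ∑ m ∈ Finset.range 9, ∑ k ∈ Finset.Icc (-2:ℤ) 2,
          (ρ j : ℂ) * (ρ k : ℂ) * Complex.exp (Complex.I * (theta9 m : ℂ) * ((j - k : ℤ) : ℂ))
        = (ρ j : ℂ) ^ 2 * 9 := by
      intro j hj
      rw [Finset.mem_Icc] at hj
      rw [Finset.sum_comm]
      have hinner : ∀ k ∈ Finset.Icc (-2 : ℤ) 2,
          ∑ m ∈ Finset.range 9, (ρ j : ℂ) * (ρ k : ℂ) *
            Complex.exp (Complex.I * (theta9 m : ℂ) * ((j - k : ℤ) : ℂ))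
          = (ρ j : ℂ) * (ρ k : ℂ) * (if j - k = 0 then 9 else 0) := by
        intro k hk
        rw [Finset.mem_Icc] at hk
        rw [← Finset.mul_sum, S_if (j - k) (by omega) (by omega)]
      have hz : ∀ k ∈ Finset.Icc (-2 : ℤ) 2, k ≠ j →
          (ρ j : ℂ) * (ρ k : ℂ) * (if j - k = 0 then (9 : ℂ) else 0) = 0 := by
        intro k _ hkj
        rw [if_neg (by omega)]
        ring
      have hm : j ∈ Finset.Icc (-2 : ℤ) 2 := Finset.mem_Icc.mpr ⟨hj.1, hj.2⟩
      rw [Finset.sum_congr rfl hinner, Finset.sum_eq_single j hz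
          (fun habs => absurd hm habs), if_pos (by omega)]
      ring
    rw [Finset.sum_congr rfl hcong]
    push_cast
    rw [← Finset.sum_mul]
    ring
  have : ∀ m : ℕ, lam' g ρ (theta9 m) * (starRingEnd ℂ) (lam' g ρ (theta9 m))
      = ((Complex.normSq (lam' g ρ (theta9 m)) : ℝ) : ℂ) := fun m => Complex.mul_conj _
  simp_rw [this] at key
  rw [← Complex.ofReal_sum] at key
  exact_mod_cast key


/-- The eigenvalue curve `λ(φ) = g·Σ_{j=-2}^{2} ρ_j e^{iφj}` of a circulant
next-nearest-neighbor Laplacian. -/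
noncomputable def lam (g : ℝ) (ρ : ℤ → ℝ) (φ : ℝ) : ℂ :=
  (g : ℂ) * ∑ j ∈ Finset.Icc (-2 : ℤ) 2,
    (ρ j : ℂ) * Complex.exp (Complex.I * (φ : ℂ) * (j : ℂ))

/-- Corollary 5 (Appendix B) of the paper: if the Liénard–Chipart necessary
condition `2Re λ_x(φ) − |λ_v(φ)|² ≤ 0` holds for all `φ`, then
`g_x − g_v²·Σ_{j=-2}^{2} ρ_{v,j}² ≤ 0`. -/
theorem routh_hurwitz_averaged (gx gv : ℝ) (ρx ρv : ℤ → ℝ)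
    (hx0 : ρx 0 = 1) (hv0 : ρv 0 = 1)
    (h : ∀ φ : ℝ, 2 * (lam gx ρx φ).re - ‖lam gv ρv φ‖ ^ 2 ≤ 0) :
    gx - gv ^ 2 * ∑ j ∈ Finset.Icc (-2 : ℤ) 2, (ρv j) ^ 2 ≤ 0 := by
  have hlam : ∀ g ρ φ, lam g ρ φ = lam' g ρ φ := fun _ _ _ => rfl
  have hsum : ∑ m ∈ Finset.range 9,
      (2 * (lam gx ρx (theta9 m)).re - ‖lam gv ρv (theta9 m)‖ ^ 2) ≤ 0 :=
    Finset.sum_nonpos fun m _ => h (theta9 m)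
  rw [Finset.sum_sub_distrib, ← Finset.mul_sum] at hsum
  have hA : ∑ m ∈ Finset.range 9, (lam gx ρx (theta9 m)).re = 9 * gx := by
    have h1 := congrArg Complex.re (sum_lam' gx ρx hx0)
    simp only [Complex.re_sum, Complex.ofReal_re] at h1
    simpa [hlam] using h1
  have hB : ∑ m ∈ Finset.range 9, ‖lam gv ρv (theta9 m)‖ ^ 2
      = 9 * gv ^ 2 * ∑ j ∈ Finset.Icc (-2 : ℤ) 2, (ρv j) ^ 2 := by
    simp_rw [hlam, Complex.sq_norm]
    exact sum_normSq_lam' gv ρv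
  rw [hA, hB] at hsum
  have hS : 1 ≤ ∑ j ∈ Finset.Icc (-2 : ℤ) 2, (ρv j) ^ 2 := by
    have h0mem : (0 : ℤ) ∈ Finset.Icc (-2 : ℤ) 2 := by decide
    have := Finset.single_le_sum (f := fun j : ℤ => (ρv j) ^ 2)
      (fun j _ => sq_nonneg _) h0mem
    simpa [hv0] using this
  nlinarith [sq_nonneg gv, mul_nonneg (sq_nonneg gv)
    (by linarith : (0:ℝ) ≤ (∑ j ∈ Finset.Icc (-2 : ℤ) 2, (ρv j) ^ 2) - 1)]
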